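/- Let {Ã_J : J ⊆ {1,…,N}} be a finite family of n×n real matrices, and suppose there exists a symmetric positive definite matrix P with Ã_J^T P Ã_J - P negative definite for all J ⊆ {1,…,N}. Let e : ℕ → ℝ^n satisfy e(k) = Ã_{I(k)} e(k-1) + g(k), where I(k) ⊆ {1,…,N} is arbitrary for each k and ‖g(k)‖ ≤ G for all k. Then the sequence e is bounded: there exists e_max ≥ 0 (depending on e(0), P, G) with ‖e(k)‖ ≤ e_max for all k. -/

import Mathlib

set_option maxHeartbeats 1000000
set_option synthInstance.maxHeartbeats 400000

open Matrix

namespace Stmt6Aux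

variable {n : ℕ}

/-- quadratic form of a matrix on Euclidean space -/
noncomputable def qf (M : Matrix (Fin n) (Fin n) ℝ) (x : EuclideanSpace ℝ (Fin n)) : ℝ :=
  (WithLp.equiv 2 (Fin n → ℝ) x) ⬝ᵥ (M *ᵥ (WithLp.equiv 2 (Fin n → ℝ) x))

open RealInnerProductSpace

lemma inner_eq_dot (M : Matrix (Fin n) (Fin n) ℝ) (x y : EuclideanSpace ℝ (Fin n)) :
    ⟪x, Matrix.toEuclideanLin M y⟫ =
      (WithLp.equiv 2 (Fin n → ℝ) x) ⬝ᵥ (M *ᵥ (WithLp.equiv 2 (Fin n → ℝ) y)) := by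
  simp [PiLp.inner_apply, dotProduct, RCLike.inner_apply, starRingEnd_apply, star_trivial,
    Matrix.toEuclideanLin_apply]
  exact Finset.sum_congr rfl fun i _ => mul_comm _ _

lemma qf_eq_inner (M : Matrix (Fin n) (Fin n) ℝ) (x : EuclideanSpace ℝ (Fin n)) :
    qf M x = ⟪x, Matrix.toEuclideanLin M x⟫ := (inner_eq_dot M x x).symm

lemma qf_smul (M : Matrix (Fin n) (Fin n) ℝ) (c : ℝ) (x : EuclideanSpace ℝ (Fin n)) :
    qf M (c • x) = c ^ 2 * qf M x := by
  simp [qf, Matrix.mulVec_smul, smul_dotProduct, dotProduct_smul]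
  ring

lemma qf_pos {M : Matrix (Fin n) (Fin n) ℝ} (hM : M.PosDef)
    {x : EuclideanSpace ℝ (Fin n)} (hx : x ≠ 0) : 0 < qf M x := by
  have hx' : (WithLp.equiv 2 (Fin n → ℝ) x) ≠ 0 := by
    intro h
    apply hx
    have := congrArg (WithLp.equiv 2 (Fin n → ℝ)).symm h
    simpa using this
  simpa [qf, star_trivial] using hM.dotProduct_mulVec_pos hx'

lemma qf_cont (M : Matrix (Fin n) (Fin n) ℝ) :
    Continuous fun x : EuclideanSpace ℝ (Fin n) => qf M x := by
  have h : Continuous fun x : EuclideanSpace ℝ (Fin n) =>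
      ⟪x, Matrix.toEuclideanLin M x⟫ :=
    continuous_id.inner (Matrix.toEuclideanLin M).continuous_of_finiteDimensional
  simpa [qf_eq_inner] using h

lemma exists_lower {M : Matrix (Fin n) (Fin n) ℝ} (hM : M.PosDef) :
    ∃ α : ℝ, 0 < α ∧ ∀ x : EuclideanSpace ℝ (Fin n), α * ‖x‖ ^ 2 ≤ qf M x := by
  rcases Nat.eq_zero_or_pos n with hn | hn
  · subst hn
    refine ⟨1, one_pos, fun x => ?_⟩
    have hx : x = 0 := Subsingleton.elim x 0
    simp [hx, qf]
  · have hne : (Metric.sphere (0 : EuclideanSpace ℝ (Fin n)) 1).Nonempty := by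
      refine ⟨EuclideanSpace.single ⟨0, hn⟩ 1, ?_⟩
      simp [mem_sphere_zero_iff_norm, EuclideanSpace.norm_single]
    obtain ⟨x₀, hx₀, hmin⟩ :=
      (isCompact_sphere (0 : EuclideanSpace ℝ (Fin n)) 1).exists_isMinOn hne
        (qf_cont M).continuousOn
    have hx₀n : ‖x₀‖ = 1 := mem_sphere_zero_iff_norm.mp hx₀
    have hα : 0 < qf M x₀ := by
      refine qf_pos hM ?_
      intro h
      rw [h] at hx₀n
      simp at hx₀n
    refine ⟨qf M x₀, hα, fun x => ?_⟩
    by_cases hx : x = 0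
    · simp [hx, qf]
    · have hxn : 0 < ‖x‖ := norm_pos_iff.mpr hx
      set u : EuclideanSpace ℝ (Fin n) := ‖x‖⁻¹ • x with hu_def
      have hu : u ∈ Metric.sphere (0 : EuclideanSpace ℝ (Fin n)) 1 := by
        rw [mem_sphere_zero_iff_norm, hu_def, norm_smul, norm_inv, norm_norm,
          inv_mul_cancel₀ hxn.ne']
      have hqu : qf M x₀ ≤ qf M u := isMinOn_iff.mp hmin u hu
      have hscale : qf M x = ‖x‖ ^ 2 * qf M u := by
        have hx_eq : x = ‖x‖ • u := by
          rw [hu_def, smul_smul, mul_inv_cancel₀ hxn.ne', one_smul]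
        conv_lhs => rw [hx_eq]
        rw [qf_smul]
      nlinarith [sq_nonneg ‖x‖]

lemma dot_symm {P : Matrix (Fin n) (Fin n) ℝ} (hP : P.IsHermitian)
    (x y : Fin n → ℝ) : x ⬝ᵥ (P *ᵥ y) = y ⬝ᵥ (P *ᵥ x) := by
  have hPT : Pᵀ = P := by
    have := hP
    rwa [Matrix.IsHermitian, Matrix.conjTranspose_eq_transpose_of_trivial] at this
  rw [Matrix.dotProduct_mulVec]
  have hvm : x ᵥ* P = P *ᵥ x := by
    conv_lhs => rw [← hPT]
    exact Matrix.vecMul_transpose P x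
  rw [hvm, dotProduct_comm]

lemma qf_conj (P A : Matrix (Fin n) (Fin n) ℝ) (x : EuclideanSpace ℝ (Fin n)) :
    qf (Aᵀ * P * A) x = qf P (Matrix.toEuclideanLin A x) := by
  simp only [qf]
  rw [show (WithLp.equiv 2 (Fin n → ℝ)) (Matrix.toEuclideanLin A x) =
    Matrix.toLin' A (WithLp.equiv 2 (Fin n → ℝ) x) from rfl]
  rw [Matrix.toLin'_apply]
  set x' := WithLp.equiv 2 (Fin n → ℝ) x
  rw [← Matrix.mulVec_mulVec, ← Matrix.mulVec_mulVec, Matrix.dotProduct_mulVec,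
    Matrix.vecMul_transpose]

lemma qf_sub_neg (P Q : Matrix (Fin n) (Fin n) ℝ) (x : EuclideanSpace ℝ (Fin n)) :
    qf (-(Q - P)) x = qf P x - qf Q x := by
  simp [qf, Matrix.neg_mulVec, Matrix.sub_mulVec, dotProduct_neg, dotProduct_sub]

lemma qf_add_expand {P : Matrix (Fin n) (Fin n) ℝ} (hP : P.IsHermitian)
    (u v : EuclideanSpace ℝ (Fin n)) :
    qf P (u + v) = qf P u + 2 * ⟪u, Matrix.toEuclideanLin P v⟫ + qf P v := by
  rw [inner_eq_dot]
  have hadd : (WithLp.equiv 2 (Fin n → ℝ)) (u + v) =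
      WithLp.equiv 2 (Fin n → ℝ) u + WithLp.equiv 2 (Fin n → ℝ) v := rfl
  simp only [qf, hadd, Matrix.mulVec_add, dotProduct_add,
    add_dotProduct]
  have := dot_symm hP (WithLp.equiv 2 (Fin n → ℝ) v) (WithLp.equiv 2 (Fin n → ℝ) u)
  ring_nf
  linarith [this]

end Stmt6Aux

open RealInnerProductSpace in
/-- Common quadratic Lyapunov function implies boundedness of the arbitrarily
switching linear system with bounded inputs. -/
theorem stmt_6 {n N : ℕ}
    (Atil : Finset (Fin N) → Matrix (Fin n) (Fin n) ℝ)
    (P : Matrix (Fin n) (Fin n) ℝ) (hP : P.PosDef)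
    (hlyap : ∀ J : Finset (Fin N), (-((Atil J)ᵀ * P * (Atil J) - P)).PosDef)
    (I : ℕ → Finset (Fin N)) (e g : ℕ → EuclideanSpace ℝ (Fin n)) (G : ℝ)
    (hrec : ∀ k : ℕ, 1 ≤ k → e k = Matrix.toEuclideanLin (Atil (I k)) (e (k - 1)) + g k)
    (hg : ∀ k, ‖g k‖ ≤ G) :
    ∃ emax : ℝ, 0 ≤ emax ∧ ∀ k, ‖e k‖ ≤ emax := by
  classical
  have hG0 : 0 ≤ G := le_trans (norm_nonneg _) (hg 0)
  obtain ⟨α, hα0, hαle⟩ := Stmt6Aux.exists_lower hP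
  set β := ‖LinearMap.toContinuousLinearMap (Matrix.toEuclideanLin P)‖ with hβdef
  have hβ0 : 0 ≤ β := norm_nonneg _
  have hPnorm : ∀ y : EuclideanSpace ℝ (Fin n), ‖Matrix.toEuclideanLin P y‖ ≤ β * ‖y‖ := by
    intro y
    have h := (LinearMap.toContinuousLinearMap (Matrix.toEuclideanLin P)).le_opNorm y
    simpa using h
  have hcross : ∀ x y : EuclideanSpace ℝ (Fin n),
      ⟪x, Matrix.toEuclideanLin P y⟫ ≤ β * ‖x‖ * ‖y‖ := by
    intro x y
    calc ⟪x, Matrix.toEuclideanLin P y⟫ ≤ ‖x‖ * ‖Matrix.toEuclideanLin P y‖ :=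
          real_inner_le_norm _ _
      _ ≤ ‖x‖ * (β * ‖y‖) := by
          exact mul_le_mul_of_nonneg_left (hPnorm y) (norm_nonneg x)
      _ = β * ‖x‖ * ‖y‖ := by ring
  have hupper : ∀ x : EuclideanSpace ℝ (Fin n), Stmt6Aux.qf P x ≤ β * ‖x‖ ^ 2 := by
    intro x
    rw [Stmt6Aux.qf_eq_inner]
    calc ⟪x, Matrix.toEuclideanLin P x⟫ ≤ β * ‖x‖ * ‖x‖ := hcross x x
      _ = β * ‖x‖ ^ 2 := by ring
  -- γ : uniform decrease
  have hγex : ∀ J : Finset (Fin N), ∃ γ : ℝ, 0 < γ ∧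
      ∀ x : EuclideanSpace ℝ (Fin n),
        γ * ‖x‖ ^ 2 ≤ Stmt6Aux.qf (-((Atil J)ᵀ * P * (Atil J) - P)) x :=
    fun J => Stmt6Aux.exists_lower (hlyap J)
  choose γf hγ0 hγle using hγex
  set γ := Finset.univ.inf' Finset.univ_nonempty γf with hγdef
  have hγpos : 0 < γ := by
    rw [hγdef, Finset.lt_inf'_iff]
    exact fun J _ => hγ0 J
  have hlyapV : ∀ (J : Finset (Fin N)) (x : EuclideanSpace ℝ (Fin n)),
      Stmt6Aux.qf P (Matrix.toEuclideanLin (Atil J) x) ≤ Stmt6Aux.qf P x - γ * ‖x‖ ^ 2 := by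
    intro J x
    have h1 : γ * ‖x‖ ^ 2 ≤ Stmt6Aux.qf (-((Atil J)ᵀ * P * (Atil J) - P)) x := by
      refine le_trans ?_ (hγle J x)
      exact mul_le_mul_of_nonneg_right (Finset.inf'_le _ (Finset.mem_univ J)) (sq_nonneg _)
    rw [Stmt6Aux.qf_sub_neg, Stmt6Aux.qf_conj] at h1
    linarith
  -- C : uniform operator norm bound
  set C := Finset.univ.sup' Finset.univ_nonempty
      (fun J => ‖LinearMap.toContinuousLinearMap (Matrix.toEuclideanLin (Atil J))‖) with hCdef
  have hC : ∀ (J : Finset (Fin N)) (x : EuclideanSpace ℝ (Fin n)),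
      ‖Matrix.toEuclideanLin (Atil J) x‖ ≤ C * ‖x‖ := by
    intro J x
    have h := (LinearMap.toContinuousLinearMap (Matrix.toEuclideanLin (Atil J))).le_opNorm x
    have h2 : ‖LinearMap.toContinuousLinearMap (Matrix.toEuclideanLin (Atil J))‖ ≤ C :=
      Finset.le_sup' (fun J => ‖LinearMap.toContinuousLinearMap (Matrix.toEuclideanLin (Atil J))‖)
        (Finset.mem_univ J)
    have h3 := mul_le_mul_of_nonneg_right h2 (norm_nonneg x)
    simpa using le_trans h h3
  have hC0 : 0 ≤ C :=
    le_trans (norm_nonneg _)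
      (Finset.le_sup' (fun J => ‖LinearMap.toContinuousLinearMap (Matrix.toEuclideanLin (Atil J))‖)
        (Finset.mem_univ (∅ : Finset (Fin N))))
  -- constants
  set c₁ := 2 * C * β * G with hc₁def
  set c₂ := β * G ^ 2 with hc₂def
  have hc₁0 : 0 ≤ c₁ := by positivity
  have hc₂0 : 0 ≤ c₂ := by positivity
  set V := fun x : EuclideanSpace ℝ (Fin n) => Stmt6Aux.qf P x with hVdef
  -- step inequality
  have hstep : ∀ k : ℕ, V (e (k + 1)) ≤ V (e k) - γ * ‖e k‖ ^ 2 + c₁ * ‖e k‖ + c₂ := by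
    intro k
    have hk : e (k + 1) = Matrix.toEuclideanLin (Atil (I (k + 1))) (e k) + g (k + 1) := by
      have := hrec (k + 1) (Nat.le_add_left 1 k)
      simpa using this
    set J := I (k + 1)
    set u := e k
    set w := g (k + 1)
    have hexp : V (e (k + 1)) = V (Matrix.toEuclideanLin (Atil J) u) +
        2 * ⟪Matrix.toEuclideanLin (Atil J) u, Matrix.toEuclideanLin P w⟫ + V w := by
      rw [hk]
      exact Stmt6Aux.qf_add_expand hP.1 _ _
    have h1 := hlyapV J u
    have h2 : ⟪Matrix.toEuclideanLin (Atil J) u, Matrix.toEuclideanLin P w⟫ ≤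
        β * (C * ‖u‖) * G := by
      have ha := hcross (Matrix.toEuclideanLin (Atil J) u) w
      have hb := hC J u
      have hgk := hg (k + 1)
      have hn1 : (0:ℝ) ≤ ‖Matrix.toEuclideanLin (Atil J) u‖ := norm_nonneg _
      have hn2 : (0:ℝ) ≤ ‖w‖ := norm_nonneg _
      have hn3 : (0:ℝ) ≤ ‖u‖ := norm_nonneg _
      nlinarith [mul_le_mul_of_nonneg_left hb hβ0, mul_le_mul_of_nonneg_left hgk hβ0]
    have h3 : V w ≤ c₂ := by
      have hgk : ‖w‖ ≤ G := hg (k + 1)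
      have hw2 : ‖w‖ ^ 2 ≤ G ^ 2 := by nlinarith [norm_nonneg w]
      have hmul := mul_le_mul_of_nonneg_left hw2 hβ0
      have := hupper w
      have hfin : Stmt6Aux.qf P w ≤ β * G ^ 2 := by linarith
      simpa [hVdef, hc₂def] using hfin
    have hc1eq : 2 * (β * (C * ‖u‖) * G) = c₁ * ‖u‖ := by rw [hc₁def]; ring
    calc V (e (k + 1)) = V (Matrix.toEuclideanLin (Atil J) u) +
        2 * ⟪Matrix.toEuclideanLin (Atil J) u, Matrix.toEuclideanLin P w⟫ + V w := hexp
      _ ≤ (V u - γ * ‖u‖ ^ 2) + 2 * (β * (C * ‖u‖) * G) + c₂ := by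
          have h1' : V (Matrix.toEuclideanLin (Atil J) u) ≤ V u - γ * ‖u‖ ^ 2 := h1
          linarith [h1', h2, h3]
      _ = V u - γ * ‖u‖ ^ 2 + c₁ * ‖u‖ + c₂ := by rw [hc1eq]
  -- invariant
  set R := max 1 ((c₁ + c₂) / γ) with hRdef
  have hR1 : (1:ℝ) ≤ R := le_max_left _ _
  have hR0 : (0:ℝ) ≤ R := le_trans zero_le_one hR1
  set M := max (V (e 0)) (β * R ^ 2 + c₁ * R + c₂) with hMdef
  have hinv : ∀ k, V (e k) ≤ M := by
    intro k
    induction k with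
    | zero => exact le_max_left _ _
    | succ k ih =>
      have hs := hstep k
      by_cases hcase : ‖e k‖ ≤ R
      · have hub : V (e k) ≤ β * ‖e k‖ ^ 2 := hupper (e k)
        have hsq : ‖e k‖ ^ 2 ≤ R ^ 2 := by nlinarith [norm_nonneg (e k)]
        have hm1 := mul_le_mul_of_nonneg_left hsq hβ0
        have hm2 := mul_le_mul_of_nonneg_left hcase hc₁0
        have hm3 := mul_nonneg hγpos.le (sq_nonneg ‖e k‖)
        have : V (e (k + 1)) ≤ β * R ^ 2 + c₁ * R + c₂ := by linarith
        exact le_trans this (le_max_right _ _)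
      · push_neg at hcase
        have hdiv : (c₁ + c₂) / γ ≤ ‖e k‖ := le_trans (le_max_right 1 _) hcase.le
        have hmul : c₁ + c₂ ≤ γ * ‖e k‖ := by
          rw [div_le_iff₀ hγpos] at hdiv
          linarith [hdiv]
        have hu1 : (1:ℝ) ≤ ‖e k‖ := le_trans hR1 hcase.le
        have hdecr : c₁ * ‖e k‖ + c₂ ≤ γ * ‖e k‖ ^ 2 := by
          nlinarith [hu1, hc₁0, hc₂0]
        linarith [hs, ih, hdecr]
  refine ⟨Real.sqrt (M / α), Real.sqrt_nonneg _, fun k => ?_⟩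
  have h1 : α * ‖e k‖ ^ 2 ≤ M := le_trans (hαle (e k)) (hinv k)
  have h2 : ‖e k‖ ^ 2 ≤ M / α := by
    rw [le_div_iff₀ hα0]
    linarith [h1]
  calc ‖e k‖ = Real.sqrt (‖e k‖ ^ 2) := by
        rw [Real.sqrt_sq (norm_nonneg _)]
    _ ≤ Real.sqrt (M / α) := Real.sqrt_le_sqrt h2
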